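/- Let X be a Banach space and P an idempotent bounded operator on X. Let T be a bounded operator such that TP − PT is compact and there exists a bounded operator S with SP − PS compact and S(T + P) − I compact. Then writing T₂ = ((I−P)T(I−P)) restricted to N(P), the operator T₂ is upper semi-Fredholm with complemented range (i.e., there exist S₂ and finite rank F₂ on N(P) with S₂T₂ = I + F₂). -/

import Mathlib

open ContinuousLinearMap

/-- A bounded operator is Fredholm if its kernel is finite dimensional and its range
is closed of finite codimension. -/
def IsFredholm {E : Type*} [NormedAddCommGroup E] [NormedSpace ℂ E] (T : E →L[ℂ] E) : Prop :=
  FiniteDimensional ℂ (LinearMap.ker T.toLinearMap) ∧ IsClosed (LinearMap.range T.toLinearMap : Set E) ∧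
    FiniteDimensional ℂ (E ⧸ LinearMap.range T.toLinearMap)

/-- The Fredholm index `dim N(T) - codim R(T)`. -/
noncomputable def fredInd {E : Type*} [NormedAddCommGroup E] [NormedSpace ℂ E]
    (T : E →L[ℂ] E) : ℤ :=
  (Module.finrank ℂ (LinearMap.ker T.toLinearMap) : ℤ) - (Module.finrank ℂ (E ⧸ LinearMap.range T.toLinearMap) : ℤ)

/-- A Riesz operator: `T - λ•I` is Fredholm for every nonzero scalar `λ`. -/
def IsRiesz {E : Type*} [NormedAddCommGroup E] [NormedSpace ℂ E] (T : E →L[ℂ] E) : Prop :=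
  ∀ c : ℂ, c ≠ 0 → _root_.IsFredholm (T - c • (1 : E →L[ℂ] E))

/-- Restriction of an operator to an invariant subspace. -/
def restrictCLM {E : Type*} [NormedAddCommGroup E] [NormedSpace ℂ E] (T : E →L[ℂ] E)
    (M : Submodule ℂ E) (h : ∀ x : M, T ↑x ∈ M) : M →L[ℂ] M :=
  (T.comp M.subtypeL).codRestrict M h

/-- A finite rank operator. -/
def FinRank {E : Type*} [NormedAddCommGroup E] [NormedSpace ℂ E] (F : E →L[ℂ] E) : Prop :=
  FiniteDimensional ℂ (LinearMap.range F.toLinearMap)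

/-- An operator commuting with `P` leaves the range of `P` invariant. -/
lemma rangeInv {E : Type*} [NormedAddCommGroup E] [NormedSpace ℂ E] {P T : E →L[ℂ] E}
    (hc : T ∘L P = P ∘L T) : ∀ x : LinearMap.range P.toLinearMap, T ↑x ∈ LinearMap.range P.toLinearMap := by
  rintro ⟨_, y, rfl⟩
  exact ⟨T y, by simpa using (DFunLike.congr_fun hc y).symm⟩

/-- An operator commuting with `P` leaves the kernel of `P` invariant. -/
lemma kerInv {E : Type*} [NormedAddCommGroup E] [NormedSpace ℂ E] {P T : E →L[ℂ] E}
    (hc : T ∘L P = P ∘L T) : ∀ x : LinearMap.ker P.toLinearMap, T ↑x ∈ LinearMap.ker P.toLinearMap := by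
  rintro ⟨x, hx⟩
  have h1 : T (P x) = P (T x) := DFunLike.congr_fun hc x
  simp only [LinearMap.mem_ker] at hx ⊢
  simp only [ContinuousLinearMap.coe_coe] at *
  rw [← h1, hx, map_zero]

/-- `P T P` leaves the range of `P` invariant. -/
lemma rangeInvQuad {E : Type*} [NormedAddCommGroup E] [NormedSpace ℂ E] (P T : E →L[ℂ] E) :
    ∀ x : LinearMap.range P.toLinearMap, (P ∘L T ∘L P) ↑x ∈ LinearMap.range P.toLinearMap :=
  fun x => ⟨T (P ↑x), rfl⟩

/-- `(I-P) T (I-P)` leaves the kernel of `P` invariant when `P` is idempotent. -/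
lemma kerInvQuad {E : Type*} [NormedAddCommGroup E] [NormedSpace ℂ E] {P : E →L[ℂ] E}
    (hP : P ∘L P = P) (T : E →L[ℂ] E) :
    ∀ x : LinearMap.ker P.toLinearMap, (((1 : E →L[ℂ] E) - P) ∘L T ∘L ((1 : E →L[ℂ] E) - P)) ↑x ∈
      LinearMap.ker P.toLinearMap := by
  intro x
  have h : ∀ z, P (((1 : E →L[ℂ] E) - P) z) = 0 := by
    intro z
    have h2 : P (P z) = P z := DFunLike.congr_fun hP z
    simp [ContinuousLinearMap.sub_apply, h2]
  exact LinearMap.mem_ker.mpr (h _)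



section Aux

variable {E : Type*} [NormedAddCommGroup E] [NormedSpace ℂ E]

/-- sup of a closed submodule and a finite-dimensional submodule is closed. -/
lemma auxIsClosedSup (C G : Submodule ℂ E) (hC : IsClosed (C : Set E))
    (hG : FiniteDimensional ℂ G) : IsClosed ((C ⊔ G : Submodule ℂ E) : Set E) := by
  haveI : IsClosed (C : Set E) := hC
  haveI : FiniteDimensional ℂ (Submodule.map C.mkQ G) := Module.Finite.map G C.mkQ
  have hclosed : IsClosed ((Submodule.map C.mkQ G) : Set (E ⧸ C)) :=
    Submodule.closed_of_finiteDimensional _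
  have hset : ((C ⊔ G : Submodule ℂ E) : Set E) = C.mkQ ⁻¹' (Submodule.map C.mkQ G) := by
    ext x
    simp only [Set.mem_preimage, SetLike.mem_coe, Submodule.mem_map]
    constructor
    · intro hx
      rcases Submodule.mem_sup.1 hx with ⟨c, hc, g, hg, rfl⟩
      refine ⟨g, hg, ?_⟩
      simp only [Submodule.mkQ_apply]
      rw [Submodule.Quotient.eq]
      simpa using hc
    · rintro ⟨g, hg, hgx⟩
      have hxg : x - g ∈ C := by
        rw [← Submodule.Quotient.eq (p := C)]
        simpa only [Submodule.mkQ_apply] using hgx.symm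
      exact Submodule.mem_sup.2 ⟨x - g, hxg, g, hg, by abel⟩
  rw [hset]
  exact hclosed.preimage continuous_quot_mk

/-- Extraction of a convergent subsequence of images of a bounded sequence by a
compact operator. -/
lemma auxSeq (K : E →L[ℂ] E) (hK : IsCompactOperator ⇑K) (x : ℕ → E)
    (hx : ∀ n, ‖x n‖ ≤ 1) :
    ∃ (φ : ℕ → ℕ) (y : E), StrictMono φ ∧
      Filter.Tendsto (fun n => K (x (φ n))) Filter.atTop (nhds y) := by
  have h1 : IsCompact (closure (⇑K '' Metric.closedBall 0 1)) := by
    exact hK.isCompact_closure_image_closedBall (𝕜₁ := ℂ) 1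
  have hmem : ∀ n, K (x n) ∈ closure (⇑K '' Metric.closedBall 0 1) := fun n =>
    subset_closure ⟨x n, by simpa [Metric.mem_closedBall, dist_zero_right] using hx n, rfl⟩
  rcases h1.tendsto_subseq hmem with ⟨y, _, φ, hφ, hy⟩
  exact ⟨φ, y, hφ, hy⟩

/-- Riesz: kernel of `1 + K` is finite dimensional for compact `K`. -/
lemma auxKerFinDim (K : E →L[ℂ] E) (hK : IsCompactOperator ⇑K) :
    FiniteDimensional ℂ ((((1 : E →L[ℂ] E) + K)).ker) := by
  set N := (((1 : E →L[ℂ] E) + K)).ker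
  have hNc : IsClosed (N : Set E) := isClosed_ker _
  have hD : IsCompact (closure (⇑(-K) '' Metric.closedBall 0 1)) :=
    (hK.neg).isCompact_closure_image_closedBall (𝕜₁ := ℂ) 1
  have hball : IsCompact (Metric.closedBall (0 : N) 1) := by
    rw [Subtype.isCompact_iff]
    have hsub : (Subtype.val '' Metric.closedBall (0 : N) 1 : Set E) ⊆
        closure (⇑(-K) '' Metric.closedBall 0 1) := by
      rintro _ ⟨⟨v, hvN⟩, hv1, rfl⟩
      have hv : v + K v = 0 := by
        simpa [N, ContinuousLinearMap.add_apply] using hvN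
      have : (-K) v = v := by
        simp only [ContinuousLinearMap.neg_apply]
        exact neg_eq_of_add_eq_zero_left hv
      refine subset_closure ⟨v, ?_, this⟩
      simpa [Metric.mem_closedBall, dist_zero_right] using
        (by simpa [Metric.mem_closedBall, dist_zero_right] using hv1 : ‖v‖ ≤ 1)
    have hcl : IsClosed (Subtype.val '' Metric.closedBall (0 : N) 1 : Set E) := by
      have : (Subtype.val '' Metric.closedBall (0 : N) 1 : Set E) =
          (N : Set E) ∩ Metric.closedBall 0 1 := by
        ext v
        constructor
        · rintro ⟨⟨w, hw⟩, hw1, rfl⟩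
          exact ⟨hw, by simpa [Metric.mem_closedBall, dist_zero_right] using hw1⟩
        · rintro ⟨hv, hv1⟩
          exact ⟨⟨v, hv⟩, by simpa [Metric.mem_closedBall, dist_zero_right] using hv1, rfl⟩
      rw [this]
      exact hNc.inter Metric.isClosed_closedBall
    exact hD.of_isClosed_subset hcl hsub
  exact FiniteDimensional.of_isCompact_closedBall₀ ℂ one_pos hball

end Aux

section Master

variable {E : Type*} [NormedAddCommGroup E] [NormedSpace ℂ E] [CompleteSpace E]

/-- Master lemma: if `S ∘ A = 1 + K` with `K` compact, then `A` has finite-dimensional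
kernel and closed range. -/
lemma auxMaster (A S K : E →L[ℂ] E) (hK : IsCompactOperator ⇑K)
    (hSA : S ∘L A = 1 + K) :
    FiniteDimensional ℂ (A.ker) ∧ IsClosed ((A.range : Submodule ℂ E) : Set E) := by
  set B : E →L[ℂ] E := (1 : E →L[ℂ] E) + K with hB
  set N := B.ker with hN
  haveI hNfd : FiniteDimensional ℂ N := auxKerFinDim K hK
  have hkerle : A.ker ≤ N := by
    intro x hx
    have hx' : A x = 0 := hx
    have : B x = S (A x) := by rw [← hSA]; rfl
    simp only [hx', map_zero] at this
    exact LinearMap.mem_ker.2 this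
  have hkerfd : FiniteDimensional ℂ (A.ker) :=
    Submodule.finiteDimensional_of_le hkerle
  refine ⟨hkerfd, ?_⟩
  -- projection onto N
  obtain ⟨f, hf⟩ := Submodule.ClosedComplemented.of_finiteDimensional N
  set pN : E →L[ℂ] E := N.subtypeL ∘L f with hpN
  have hpN_mem : ∀ x, pN x ∈ N := fun x => (f x).2
  have hpN_id : ∀ x ∈ N, pN x = x := by
    intro x hx
    have : f x = ⟨x, hx⟩ := hf ⟨x, hx⟩
    simp only [hpN, ContinuousLinearMap.comp_apply, this, Submodule.subtypeL_apply]
  set M := pN.ker with hM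
  have hMc : IsClosed (M : Set E) := isClosed_ker pN
  have hmemM : ∀ x, x - pN x ∈ M := by
    intro x
    have : pN (pN x) = pN x := hpN_id _ (hpN_mem x)
    simp only [hM, LinearMap.mem_ker, ContinuousLinearMap.coe_coe, map_sub, this, sub_self]
  have hNM : ∀ x, x ∈ N → x ∈ M → x = 0 := by
    intro x hxN hxM
    have h1 : pN x = x := hpN_id x hxN
    have h2 : pN x = 0 := hxM
    rw [h1] at h2; exact h2
  -- bounded below on M
  have hbb : ∃ c : ℝ, 0 < c ∧ ∀ x ∈ M, c * ‖x‖ ≤ ‖A x‖ := by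
    by_contra hcon
    push_neg at hcon
    have hsel : ∀ n : ℕ, ∃ u : E, u ∈ M ∧ ‖u‖ = 1 ∧ ‖A u‖ < 1 / (n + 1) := by
      intro n
      obtain ⟨x, hxM, hxlt⟩ := hcon (1 / (n + 1)) (by positivity)
      have hxne : x ≠ 0 := by
        rintro rfl
        simp at hxlt
      have hxn : ‖x‖ ≠ 0 := norm_ne_zero_iff.2 hxne
      refine ⟨((‖x‖ : ℂ))⁻¹ • x, M.smul_mem _ hxM, ?_, ?_⟩
      · simp [norm_smul, abs_of_nonneg (norm_nonneg x), inv_mul_cancel₀ hxn]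
      · rw [map_smul, norm_smul]
        simp only [norm_inv, Complex.norm_real, Real.norm_eq_abs,
          abs_of_nonneg (norm_nonneg x)]
        calc ‖x‖⁻¹ * ‖A x‖ < ‖x‖⁻¹ * (1 / (n + 1) * ‖x‖) := by
              exact mul_lt_mul_of_pos_left hxlt (by positivity)
          _ = 1 / (n + 1) := by field_simp
    choose u huM hu1 huA using hsel
    have hAu : Filter.Tendsto (fun n => A (u n)) Filter.atTop (nhds 0) := by
      rw [tendsto_iff_norm_sub_tendsto_zero]
      refine squeeze_zero (fun n => by positivity) (fun n => ?_)
        tendsto_one_div_add_atTop_nhds_zero_nat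
      simpa using (huA n).le
    have hBu : Filter.Tendsto (fun n => B (u n)) Filter.atTop (nhds 0) := by
      have h2 : (fun n => B (u n)) = (fun n => S (A (u n))) := by
        funext n; rw [← hSA]; rfl
      rw [h2]
      have := (S.continuous.tendsto 0).comp hAu
      simpa [Function.comp_def] using this
    obtain ⟨φ, y, hφ, hKy⟩ := auxSeq K hK u (fun n => (hu1 n).le)
    have huconv : Filter.Tendsto (fun n => u (φ n)) Filter.atTop (nhds (-y)) := by
      have h1 : (fun n => u (φ n)) = fun n => B (u (φ n)) - K (u (φ n)) := by
        funext n
        simp [hB, ContinuousLinearMap.add_apply]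
      rw [h1]
      have := ((hBu.comp hφ.tendsto_atTop).sub hKy)
      simpa using this
    have hyM : -y ∈ M := hMc.mem_of_tendsto huconv (Filter.Eventually.of_forall fun n => huM _)
    have hynorm : ‖-y‖ = 1 := by
      have := ((continuous_norm).tendsto (-y)).comp huconv
      have h2 : Filter.Tendsto (fun n => ‖u (φ n)‖) Filter.atTop (nhds ‖-y‖) := this
      have h3 : (fun n => ‖u (φ n)‖) = fun _ => (1 : ℝ) := funext fun n => hu1 _
      rw [h3] at h2
      exact (tendsto_const_nhds_iff.1 h2).symm
    have hyN : -y ∈ N := by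
      have h1 : Filter.Tendsto (fun n => B (u (φ n))) Filter.atTop (nhds (B (-y))) :=
        (B.continuous.tendsto (-y)).comp huconv
      have h2 : Filter.Tendsto (fun n => B (u (φ n))) Filter.atTop (nhds 0) :=
        hBu.comp hφ.tendsto_atTop
      have : B (-y) = 0 := tendsto_nhds_unique h1 h2
      exact LinearMap.mem_ker.2 this
    have := hNM _ hyN hyM
    rw [this] at hynorm
    simp at hynorm
  obtain ⟨c, hc, hcb⟩ := hbb
  -- A is antilipschitz on M
  haveI : CompleteSpace M := hMc.completeSpace_coe
  set A₀ : M →L[ℂ] E := A ∘L M.subtypeL with hA₀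
  have hanti : AntilipschitzWith (⟨c, hc.le⟩ : NNReal)⁻¹ A₀ := by
    apply A₀.antilipschitz_of_bound
    intro x
    have h := hcb x.1 x.2
    have hcoe : ((((⟨c, hc.le⟩ : NNReal))⁻¹ : NNReal) : ℝ) = c⁻¹ := NNReal.coe_inv _
    rw [hcoe]
    have hx : ‖x‖ = ‖x.1‖ := rfl
    rw [hx]
    have hc0 : c ≠ 0 := hc.ne'
    calc ‖x.1‖ = c⁻¹ * (c * ‖x.1‖) := by field_simp
      _ ≤ c⁻¹ * ‖A₀ x‖ := by
          apply mul_le_mul_of_nonneg_left _ (by positivity)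
          exact h
  have hclosed₀ : IsClosed (Set.range A₀) := hanti.isClosed_range A₀.uniformContinuous
  have hrange₀ : Set.range A₀ = A '' (M : Set E) := by
    ext z
    constructor
    · rintro ⟨x, rfl⟩; exact ⟨x.1, x.2, rfl⟩
    · rintro ⟨x, hx, rfl⟩; exact ⟨⟨x, hx⟩, rfl⟩
  -- range A = map A N ⊔ map A M
  have hsup : N ⊔ M = ⊤ := by
    rw [eq_top_iff]
    intro x _
    have : x = pN x + (x - pN x) := by abel
    rw [this]
    exact Submodule.add_mem_sup (hpN_mem x) (hmemM x)
  have hrA : (A.range : Submodule ℂ E) =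
      Submodule.map (A : E →ₗ[ℂ] E) M ⊔ Submodule.map (A : E →ₗ[ℂ] E) N := by
    rw [← Submodule.map_sup, sup_comm, hsup, Submodule.map_top]
  rw [hrA]
  haveI : FiniteDimensional ℂ (Submodule.map (A : E →ₗ[ℂ] E) N) :=
    Module.Finite.map N (A : E →ₗ[ℂ] E)
  apply auxIsClosedSup
  · have : ((Submodule.map (A : E →ₗ[ℂ] E) M : Submodule ℂ E) : Set E) = A '' (M : Set E) := by
      ext z; simp [Submodule.mem_map]
    rw [this, ← hrange₀]
    exact hclosed₀
  · infer_instance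

end Master

section Quot

variable {E : Type*} [NormedAddCommGroup E] [NormedSpace ℂ E]

lemma auxPowCompact (K : E →L[ℂ] E) (hK : IsCompactOperator ⇑K) :
    ∀ n : ℕ, IsCompactOperator ⇑(((1 : E →L[ℂ] E) + K) ^ n - 1) := by
  intro n
  induction n with
  | zero =>
      have h0 : ((1 : E →L[ℂ] E) + K) ^ 0 - 1 = 0 := by simp
      rw [h0]
      refine ⟨{0}, isCompact_singleton, ?_⟩
      have hpre : ⇑(0 : E →L[ℂ] E) ⁻¹' {0} = Set.univ := by ext w; simp
      rw [hpre]; exact Filter.univ_mem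
  | succ n ih =>
      have hEq : ((1 : E →L[ℂ] E) + K) ^ (n + 1) - 1 =
          (((1 : E →L[ℂ] E) + K) ^ n - 1) + ((1 : E →L[ℂ] E) + K) ^ n * K := by
        rw [pow_succ]; noncomm_ring
      rw [hEq]
      have h2 : IsCompactOperator ⇑(((1 : E →L[ℂ] E) + K) ^ n * K) := by
        have : ⇑(((1 : E →L[ℂ] E) + K) ^ n * K) = ⇑(((1 : E →L[ℂ] E) + K) ^ n) ∘ ⇑K := by
          funext x; simp [ContinuousLinearMap.mul_apply]
        rw [this]
        exact hK.clm_comp _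
      have h3 := ih.add h2
      rwa [← ContinuousLinearMap.coe_add'] at h3

variable [CompleteSpace E]

lemma auxPowFred (K : E →L[ℂ] E) (hK : IsCompactOperator ⇑K) (n : ℕ) :
    FiniteDimensional ℂ ((((1 : E →L[ℂ] E) + K) ^ n).ker) ∧
      IsClosed (((((1 : E →L[ℂ] E) + K) ^ n).range : Submodule ℂ E) : Set E) := by
  apply auxMaster (((1 : E →L[ℂ] E) + K) ^ n) 1 (((1 : E →L[ℂ] E) + K) ^ n - 1)
    (auxPowCompact K hK n)
  rw [ContinuousLinearMap.one_def, ContinuousLinearMap.id_comp]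
  abel

lemma auxQuotFinDim (K : E →L[ℂ] E) (hK : IsCompactOperator ⇑K) :
    FiniteDimensional ℂ (E ⧸ (((1 : E →L[ℂ] E) + K)).range) := by
  set A : E →L[ℂ] E := (1 : E →L[ℂ] E) + K with hA
  set R : ℕ → Submodule ℂ E := fun k => ((A ^ k)).range with hR
  have hRclosed : ∀ k, IsClosed ((R k : Submodule ℂ E) : Set E) := fun k => (auxPowFred K hK k).2
  have hmap : ∀ k, R (k + 1) = Submodule.map (A : E →ₗ[ℂ] E) (R k) := by
    intro k
    have : A ^ (k + 1) = A ∘L A ^ k := by rw [pow_succ']; rfl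
    rw [hR]
    simp only [this]
    ext z
    simp only [LinearMap.mem_range, Submodule.mem_map, ContinuousLinearMap.coe_comp',
      Function.comp_apply, ContinuousLinearMap.coe_coe]
    constructor
    · rintro ⟨w, rfl⟩; exact ⟨(A ^ k) w, ⟨w, rfl⟩, rfl⟩
    · rintro ⟨_, ⟨w, rfl⟩, rfl⟩; exact ⟨w, rfl⟩
  have hmono : ∀ k, R (k + 1) ≤ R k := by
    rintro k _ ⟨y, rfl⟩
    exact ⟨A y, by show (A ^ k) (A y) = (A ^ (k + 1)) y; rw [← ContinuousLinearMap.mul_apply, ← pow_succ]⟩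
  have hanti : ∀ i j, i ≤ j → R j ≤ R i := by
    have hstep : ∀ d i, R (i + d) ≤ R i := by
      intro d
      induction d with
      | zero => intro i; exact le_rfl
      | succ d ih => intro i; exact le_trans (hmono (i + d)) (ih i)
    intro i j hij
    obtain ⟨d, rfl⟩ := Nat.exists_eq_add_of_le hij
    exact hstep d i
  -- stabilization
  have hstab : ∃ m, R (m + 1) = R m := by
    by_contra hcon
    push_neg at hcon
    have hsel : ∀ m, ∃ v : E, v ∈ R m ∧ ‖v‖ = 1 ∧ ∀ y ∈ R (m + 1), 1 / 2 ≤ ‖v - y‖ := by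
      intro m
      have hlt : R (m + 1) < R m := lt_of_le_of_ne (hmono m) (hcon m)
      obtain ⟨x, hxm, hxm1⟩ := SetLike.exists_of_lt hlt
      -- work inside the subtype ↥(R m)
      set G : Submodule ℂ (R m) := Submodule.comap (R m).subtype (R (m + 1)) with hG
      have hGc : IsClosed (G : Set (R m)) := by
        have : (G : Set (R m)) = Subtype.val ⁻¹' (R (m + 1) : Set E) := rfl
        rw [this]
        exact (hRclosed (m + 1)).preimage continuous_subtype_val
      have hex : ∃ z : (R m), z ∉ G := ⟨⟨x, hxm⟩, by simpa [hG] using hxm1⟩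
      obtain ⟨x₀, hx₀G, hx₀⟩ := riesz_lemma hGc hex (show (1:ℝ)/2 < 1 by norm_num)
      have hx₀ne : (x₀ : E) ≠ 0 := by
        intro h0
        apply hx₀G
        have : x₀ = 0 := Subtype.ext h0
        rw [this]; exact G.zero_mem
      have hnx : ‖(x₀ : E)‖ ≠ 0 := norm_ne_zero_iff.2 hx₀ne
      refine ⟨((‖(x₀ : E)‖ : ℂ))⁻¹ • (x₀ : E), (R m).smul_mem _ x₀.2, ?_, ?_⟩
      · simp [norm_smul, inv_mul_cancel₀ hnx]
      · intro y hy
        have hyG : ((‖(x₀ : E)‖ : ℂ)) • y ∈ R (m + 1) := (R (m + 1)).smul_mem _ hy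
        have hyRm : ((‖(x₀ : E)‖ : ℂ)) • y ∈ R m := hmono m hyG
        have := hx₀ ⟨_, hyRm⟩ (by simpa [hG] using hyG)
        have hnorm : ‖x₀ - (⟨_, hyRm⟩ : (R m))‖ = ‖(x₀ : E) - (‖(x₀ : E)‖ : ℂ) • y‖ := rfl
        rw [hnorm] at this
        have hfactor : ((‖(x₀ : E)‖ : ℂ))⁻¹ • (x₀ : E) - y =
            ((‖(x₀ : E)‖ : ℂ))⁻¹ • ((x₀ : E) - (‖(x₀ : E)‖ : ℂ) • y) := by
          rw [smul_sub, smul_smul, inv_mul_cancel₀ (by exact_mod_cast hnx), one_smul]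
        rw [hfactor, norm_smul]
        simp only [norm_inv, Complex.norm_real, Real.norm_eq_abs,
          abs_of_nonneg (norm_nonneg _)]
        rw [← mul_le_mul_iff_right₀ (show (0:ℝ) < ‖(x₀ : E)‖ from
          (norm_nonneg _).lt_of_ne' hnx)]
        calc ‖(x₀ : E)‖ * (1 / 2) = 1 / 2 * ‖(x₀ : E)‖ := by ring
          _ ≤ ‖(x₀ : E) - (‖(x₀ : E)‖ : ℂ) • y‖ := this
          _ = ‖(x₀ : E)‖ * (‖(x₀ : E)‖⁻¹ * ‖(x₀ : E) - (‖(x₀ : E)‖ : ℂ) • y‖) := by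
              field_simp
    choose v hvR hv1 hvsep using hsel
    -- separation of K images
    have hsep : ∀ i j, i < j → 1 / 2 ≤ ‖K (v j) - K (v i)‖ := by
      intro i j hij
      have hKv : ∀ m, K (v m) = A (v m) - v m := by
        intro m; simp [hA, ContinuousLinearMap.add_apply]
      have hyi : A (v i) - A (v j) + v j ∈ R (i + 1) := by
        have h1 : A (v i) ∈ R (i + 1) := by
          rw [hmap]; exact Submodule.mem_map_of_mem (hvR i)
        have h2 : A (v j) ∈ R (i + 1) := by
          apply hanti (i + 1) (j + 1) (by omega)
          rw [hmap]; exact Submodule.mem_map_of_mem (hvR j)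
        have h3 : v j ∈ R (i + 1) := hanti (i + 1) j (by omega) (hvR j)
        exact Submodule.add_mem _ (Submodule.sub_mem _ h1 h2) h3
      have hdiff : K (v j) - K (v i) = v i - (A (v i) - A (v j) + v j) := by
        rw [hKv i, hKv j]; abel
      rw [hdiff]
      exact hvsep i _ hyi
    obtain ⟨φ, y₀, hφ, hconv⟩ := auxSeq K hK v (fun n => (hv1 n).le)
    have hcauchy := hconv.cauchySeq
    rw [Metric.cauchySeq_iff] at hcauchy
    obtain ⟨N₀, hN₀⟩ := hcauchy (1 / 2) (by norm_num)
    have h1 := hN₀ (N₀ + 1) (by omega) N₀ (by omega)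
    have hlt : φ N₀ < φ (N₀ + 1) := hφ (by omega)
    have := hsep (φ N₀) (φ (N₀ + 1)) hlt
    rw [dist_eq_norm] at h1
    linarith
  obtain ⟨m₀, hm₀⟩ := hstab
  have hstep : ∀ j, m₀ ≤ j → R j = R m₀ := by
    intro j hj
    induction j, hj using Nat.le_induction with
    | base => rfl
    | succ k hk ih => rw [hmap, ih, ← hmap, hm₀]
  set n := m₀ + 1 with hn
  have h2n : R (n + n) = R n := by
    rw [hstep (n + n) (by omega), hstep n (by omega)]
  -- sup decomposition
  have hsuptop : (⊤ : Submodule ℂ E) ≤ ((A ^ n)).ker ⊔ A.range := by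
    intro x _
    have hx : (A ^ n) x ∈ R (n + n) := by
      rw [h2n]; exact ⟨x, rfl⟩
    obtain ⟨y, hy⟩ := hx
    have hk : x - (A ^ n) y ∈ ((A ^ n)).ker := by
      have : (A ^ n) ((A ^ n) y) = (A ^ (n + n)) y := by
        rw [← ContinuousLinearMap.mul_apply, ← pow_add]
      simp only [LinearMap.mem_ker, ContinuousLinearMap.coe_coe, map_sub, this, hy, sub_self]
      exact sub_eq_zero.2 hy.symm
    have hr : (A ^ n) y ∈ A.range := by
      have : (A ^ n) y = A ((A ^ m₀) y) := by
        rw [hn, pow_succ', ContinuousLinearMap.mul_apply]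
      exact ⟨(A ^ m₀) y, this.symm⟩
    have : x = (x - (A ^ n) y) + (A ^ n) y := by abel
    rw [this]
    exact Submodule.add_mem_sup hk hr
  haveI hkerfd : FiniteDimensional ℂ (((A ^ n)).ker) := (auxPowFred K hK n).1
  -- surjection from the kernel onto the quotient
  set g : (((A ^ n)).ker) →ₗ[ℂ] (E ⧸ A.range) :=
    (A.range).mkQ.comp (((A ^ n)).ker).subtype with hg
  have hsurj : Function.Surjective g := by
    intro z
    obtain ⟨x, rfl⟩ := (A.range).mkQ_surjective z
    rcases Submodule.mem_sup.1 (hsuptop (Submodule.mem_top : x ∈ ⊤)) with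
      ⟨kx, hkx, r, hr, hsum⟩
    refine ⟨⟨kx, hkx⟩, ?_⟩
    have : (A.range).mkQ r = 0 := (Submodule.Quotient.mk_eq_zero _).2 hr
    calc g ⟨kx, hkx⟩ = (A.range).mkQ kx := rfl
      _ = (A.range).mkQ kx + (A.range).mkQ r := by rw [this, add_zero]
      _ = (A.range).mkQ (kx + r) := by rw [map_add]
      _ = (A.range).mkQ x := by rw [hsum]
  exact Module.Finite.of_surjective g hsurj

end Quot

section Pseudo

variable {E : Type*} [NormedAddCommGroup E] [NormedSpace ℂ E] [CompleteSpace E]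

/-- A Fredholm-type operator admits a left pseudo-inverse modulo finite rank. -/
lemma auxPseudoInverse (A : E →L[ℂ] E)
    (h1 : FiniteDimensional ℂ (A.ker))
    (h2 : IsClosed ((A.range : Submodule ℂ E) : Set E))
    (h3 : FiniteDimensional ℂ (E ⧸ (A.range : Submodule ℂ E))) :
    ∃ R F : E →L[ℂ] E, FiniteDimensional ℂ (F.range) ∧ R ∘L A = 1 + F := by
  set N := A.ker with hN
  obtain ⟨f, hf⟩ := Submodule.ClosedComplemented.of_finiteDimensional N
  set pN : E →L[ℂ] E := N.subtypeL ∘L f with hpN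
  have hpN_mem : ∀ x, pN x ∈ N := fun x => (f x).2
  have hpN_id : ∀ x ∈ N, pN x = x := by
    intro x hx
    have : f x = ⟨x, hx⟩ := hf ⟨x, hx⟩
    simp only [hpN, ContinuousLinearMap.comp_apply, this, Submodule.subtypeL_apply]
  set M := pN.ker with hM
  have hMc : IsClosed (M : Set E) := isClosed_ker pN
  have hmemM : ∀ x, x - pN x ∈ M := by
    intro x
    have : pN (pN x) = pN x := hpN_id _ (hpN_mem x)
    simp only [hM, LinearMap.mem_ker, ContinuousLinearMap.coe_coe, map_sub, this, sub_self]
  have hApN : ∀ x, A (pN x) = 0 := fun x => hpN_mem x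
  haveI : CompleteSpace M := hMc.completeSpace_coe
  haveI : CompleteSpace (A.range : Submodule ℂ E) := h2.completeSpace_coe
  -- projection onto range A
  haveI : FiniteDimensional ℂ (E ⧸ (A.range : Submodule ℂ E)) := h3
  obtain ⟨g, hg⟩ := Submodule.ClosedComplemented.of_quotient_finiteDimensional h2
  -- the bijection M ≃ range A
  set A₀ : M →L[ℂ] (A.range : Submodule ℂ E) :=
    ContinuousLinearMap.codRestrict (A ∘L M.subtypeL) (A.range)
      (fun x => LinearMap.mem_range_self _ _) with hA₀
  have hA₀_apply : ∀ x : M, (A₀ x : E) = A x.1 := fun x => rfl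
  have hinj : A₀.ker = ⊥ := by
    rw [LinearMap.ker_eq_bot']
    intro x hx
    have hx' : A x.1 = 0 := by
      have := congrArg (Subtype.val) hx
      simpa [hA₀_apply] using this
    have hxN : (x : E) ∈ N := LinearMap.mem_ker.2 hx'
    have hxM : (x : E) ∈ M := x.2
    have h0 : pN x.1 = x.1 := hpN_id _ hxN
    have h0' : pN x.1 = 0 := hxM
    exact Subtype.ext (by rw [← h0, h0']; simp)
  have hsurj : A₀.range = ⊤ := by
    rw [LinearMap.range_eq_top]
    rintro ⟨z, hz⟩
    obtain ⟨x, rfl⟩ := hz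
    refine ⟨⟨x - pN x, hmemM x⟩, ?_⟩
    apply Subtype.ext
    rw [ContinuousLinearMap.coe_coe, hA₀_apply]
    simp [map_sub, hApN]
  set e := ContinuousLinearEquiv.ofBijective A₀ hinj hsurj with he
  set R : E →L[ℂ] E := M.subtypeL ∘L (e.symm : (A.range : Submodule ℂ E) →L[ℂ] M) ∘L g
    with hRdef
  refine ⟨R, -pN, ?_, ?_⟩
  · have hle : ((-pN)).range ≤ N := by
      rintro _ ⟨x, rfl⟩
      exact N.neg_mem (hpN_mem x)
    exact Submodule.finiteDimensional_of_le hle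
  · ext x
    have h4 : g (A x) = ⟨A x, LinearMap.mem_range_self _ x⟩ := hg ⟨A x, LinearMap.mem_range_self _ x⟩
    have h5 : e ⟨x - pN x, hmemM x⟩ = ⟨A x, LinearMap.mem_range_self _ x⟩ := by
      apply Subtype.ext
      have : (e ⟨x - pN x, hmemM x⟩ : E) = A (x - pN x) := rfl
      rw [this]
      simp [map_sub, hApN]
    have h6 : e.symm ⟨A x, LinearMap.mem_range_self _ x⟩ = ⟨x - pN x, hmemM x⟩ := by
      rw [← h5, ContinuousLinearEquiv.symm_apply_apply]
    have hRx : R (A x) = x - pN x := by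
      rw [hRdef]
      simp only [ContinuousLinearMap.comp_apply, h4]
      rw [show ((e.symm : (A.range : Submodule ℂ E) →L[ℂ] M)
        ⟨A x, LinearMap.mem_range_self _ x⟩) = e.symm ⟨A x, LinearMap.mem_range_self _ x⟩ from rfl]
      rw [h6]
      rfl
    simp only [ContinuousLinearMap.comp_apply, ContinuousLinearMap.add_apply,
      ContinuousLinearMap.one_apply, ContinuousLinearMap.neg_apply]
    rw [hRx]
    abel

end Pseudo

section Restrict

variable {E : Type*} [NormedAddCommGroup E] [NormedSpace ℂ E]

lemma auxRestrictCompact (Kc : E →L[ℂ] E) (M : Submodule ℂ E) (hMc : IsClosed (M : Set E))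
    (hinv : ∀ x : M, Kc ↑x ∈ M) (hc : IsCompactOperator ⇑Kc) :
    IsCompactOperator ⇑(restrictCLM Kc M hinv) := by
  obtain ⟨W, hWc, hWn⟩ := hc
  refine ⟨Subtype.val ⁻¹' (W ∩ M), ?_, ?_⟩
  · rw [Subtype.isCompact_iff]
    have himg : Subtype.val '' (Subtype.val ⁻¹' (W ∩ M) : Set M) = W ∩ M := by
      ext z
      constructor
      · rintro ⟨⟨w, hw⟩, hmem, rfl⟩; exact hmem
      · rintro ⟨hzW, hzM⟩; exact ⟨⟨z, hzM⟩, ⟨hzW, hzM⟩, rfl⟩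
    rw [himg]
    exact hWc.inter_right hMc
  · have hpre : ⇑(restrictCLM Kc M hinv) ⁻¹' (Subtype.val ⁻¹' (W ∩ M)) =
        Subtype.val ⁻¹' (⇑Kc ⁻¹' W) := by
      ext x
      simp only [Set.mem_preimage]
      have hcoe : ((restrictCLM Kc M hinv) x : E) = Kc ↑x := rfl
      rw [hcoe]
      exact ⟨fun h => h.1, fun h => ⟨h, hinv x⟩⟩
    rw [hpre]
    have h0 : Filter.Tendsto (Subtype.val : M → E) (nhds 0) (nhds 0) := by
      have := continuous_subtype_val.tendsto (0 : M)
      simpa using this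
    exact h0 hWn

end Restrict

/-- If `Π(T)` is left `Π(P)`-invertible in the Calkin algebra (`T` is a
left semi-`P`-Fredholm operator), then the compression `T₂` of `T` to `N(P)` is upper
semi-Fredholm and left invertible modulo finite rank operators on `N(P)`. -/
theorem compression_left_semiFredholm
    {X : Type*} [NormedAddCommGroup X] [NormedSpace ℂ X] [CompleteSpace X]
    (P T : X →L[ℂ] X) (hP : P ∘L P = P)
    (hTP : IsCompactOperator ⇑(T ∘L P - P ∘L T))
    (hS : ∃ S : X →L[ℂ] X, IsCompactOperator ⇑(S ∘L P - P ∘L S) ∧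
      IsCompactOperator ⇑(S ∘L (T + P) - 1)) :
    FiniteDimensional ℂ (LinearMap.ker (ContinuousLinearMap.toLinearMap (restrictCLM
        (((1 : X →L[ℂ] X) - P) ∘L T ∘L ((1 : X →L[ℂ] X) - P))
        (LinearMap.ker P.toLinearMap) (kerInvQuad hP T)))) ∧
    IsClosed (LinearMap.range (ContinuousLinearMap.toLinearMap (restrictCLM
        (((1 : X →L[ℂ] X) - P) ∘L T ∘L ((1 : X →L[ℂ] X) - P))
        (LinearMap.ker P.toLinearMap) (kerInvQuad hP T))) : Set (LinearMap.ker P.toLinearMap)) ∧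
    ∃ (S₂ F₂ : LinearMap.ker P.toLinearMap →L[ℂ] LinearMap.ker P.toLinearMap), FinRank F₂ ∧
      S₂ ∘L restrictCLM (((1 : X →L[ℂ] X) - P) ∘L T ∘L ((1 : X →L[ℂ] X) - P))
        (LinearMap.ker P.toLinearMap) (kerInvQuad hP T) = 1 + F₂ := by
  obtain ⟨S, hSP, hST⟩ := hS
  have hPP : ∀ z, P (P z) = P z := fun z => DFunLike.congr_fun hP z
  have hker : IsClosed ((LinearMap.ker P.toLinearMap : Submodule ℂ X) : Set X) := isClosed_ker P
  haveI : CompleteSpace (LinearMap.ker P.toLinearMap : Submodule ℂ X) := hker.completeSpace_coe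
  set Q : X →L[ℂ] X := (1 : X →L[ℂ] X) - P with hQ
  have hQ0 : ∀ z, P (Q z) = 0 := by
    intro z
    simp [hQ, ContinuousLinearMap.sub_apply, hPP z]
  set K₁' : X →L[ℂ] X := S ∘L P - P ∘L S with hK₁'
  set K₂' : X →L[ℂ] X := S ∘L (T + P) - 1 with hK₂'
  set Cbig : X →L[ℂ] X := Q ∘L (K₂' ∘L Q) - Q ∘L (K₁' ∘L Q) - Q ∘L (K₁' ∘L (T ∘L Q))
    with hCbig
  have hCbigc : IsCompactOperator ⇑Cbig := by
    have c1 : IsCompactOperator ⇑(Q ∘L (K₂' ∘L Q)) := (hST.comp_clm Q).clm_comp Q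
    have c2 : IsCompactOperator ⇑(Q ∘L (K₁' ∘L Q)) := (hSP.comp_clm Q).clm_comp Q
    have c3 : IsCompactOperator ⇑(Q ∘L (K₁' ∘L (T ∘L Q))) := (hSP.comp_clm (T ∘L Q)).clm_comp Q
    have hco : ⇑Cbig = (⇑(Q ∘L (K₂' ∘L Q)) - ⇑(Q ∘L (K₁' ∘L Q))) - ⇑(Q ∘L (K₁' ∘L (T ∘L Q))) := by
      funext z
      simp [hCbig, ContinuousLinearMap.sub_apply]
    rw [hco]
    exact (c1.sub c2).sub c3
  have hCinv : ∀ x : (LinearMap.ker P.toLinearMap : Submodule ℂ X), Cbig ↑x ∈ LinearMap.ker P.toLinearMap := by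
    intro x
    have : P (Cbig ↑x) = 0 := by
      simp [hCbig, ContinuousLinearMap.sub_apply, ContinuousLinearMap.comp_apply, hQ0]
    exact LinearMap.mem_ker.2 this
  set T₂ := restrictCLM (((1 : X →L[ℂ] X) - P) ∘L T ∘L ((1 : X →L[ℂ] X) - P))
    (LinearMap.ker P.toLinearMap) (kerInvQuad hP T) with hT₂
  set S₂ := restrictCLM (((1 : X →L[ℂ] X) - P) ∘L S ∘L ((1 : X →L[ℂ] X) - P))
    (LinearMap.ker P.toLinearMap) (kerInvQuad hP S) with hS₂
  set 𝒦 := restrictCLM Cbig (LinearMap.ker P.toLinearMap) hCinv with h𝒦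
  have h𝒦c : IsCompactOperator ⇑𝒦 := auxRestrictCompact Cbig _ hker hCinv hCbigc
  have hfact : S₂ ∘L T₂ = 1 + 𝒦 := by
    ext x
    have hx : P (x : X) = 0 := x.2
    have hl : ((S₂ (T₂ x)) : X) =
        (((1 : X →L[ℂ] X) - P) ∘L S ∘L ((1 : X →L[ℂ] X) - P))
          ((((1 : X →L[ℂ] X) - P) ∘L T ∘L ((1 : X →L[ℂ] X) - P)) (x : X)) := rfl
    have hr : (((1 + 𝒦) x : (LinearMap.ker P.toLinearMap : Submodule ℂ X)) : X) = (x : X) + Cbig (x : X) := rfl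
    rw [ContinuousLinearMap.comp_apply, hl, hr]
    simp only [hCbig, hK₁', hK₂', hQ, ContinuousLinearMap.comp_apply,
      ContinuousLinearMap.sub_apply, ContinuousLinearMap.add_apply,
      ContinuousLinearMap.one_apply, map_sub, map_add, hx, sub_zero, map_zero, hPP]
    abel
  obtain ⟨hkfd, hrc⟩ := auxMaster T₂ S₂ 𝒦 h𝒦c hfact
  refine ⟨hkfd, hrc, ?_⟩
  have h1K := auxMaster (1 + 𝒦) 1 𝒦 h𝒦c
    (by rw [ContinuousLinearMap.one_def, ContinuousLinearMap.id_comp])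
  have hq := auxQuotFinDim 𝒦 h𝒦c
  obtain ⟨R, F, hFfd, hRF⟩ := auxPseudoInverse (1 + 𝒦) h1K.1 h1K.2 hq
  refine ⟨R ∘L S₂, F, hFfd, ?_⟩
  rw [ContinuousLinearMap.comp_assoc, hfact]
  exact hRF
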